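/- For every integer n ≥ 2, every p with 1/2 ≤ p < 1, and d = 2n − 2, there exists a d-dependent random graph distribution G(n,p,d) such that with probability 1 the sampled graph contains a clique on at least n/2 vertices. -/

import Mathlib

/-- A `d`-dependent random graph distribution `G(n, p, d)`: a probability space with
Boolean random variables `X e`, one for each unordered pair `e` of distinct vertices of
`Fin n`, each equal to `true` with probability `p`, such that each `X e` is independent of
the joint family of all variables at pairs outside a set `N e` of at most `d` other pairs. -/
structure DepGraph (n : ℕ) (p : ℝ) (d : ℕ) where
  Ω : Type
  [mΩ : MeasurableSpace Ω]
  μ : MeasureTheory.Measure Ω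
  [probμ : MeasureTheory.IsProbabilityMeasure μ]
  X : Sym2 (Fin n) → Ω → Bool
  meas : ∀ e, Measurable (X e)
  edgeProb : ∀ e : Sym2 (Fin n), ¬ e.IsDiag → μ {ω | X e ω = true} = ENNReal.ofReal p
  locDep : ∀ e : Sym2 (Fin n), ¬ e.IsDiag →
    ∃ N : Finset (Sym2 (Fin n)), e ∉ N ∧ N.card ≤ d ∧
      ProbabilityTheory.IndepFun (X e)
        (fun ω (f : {f : Sym2 (Fin n) // ¬ f.IsDiag ∧ f ∉ N ∧ f ≠ e}) => X f.1 ω) μ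

attribute [instance] DepGraph.mΩ DepGraph.probμ

open MeasureTheory ProbabilityTheory

/-- The random simple graph sampled from a `d`-dependent random graph distribution:
`i` and `j` are adjacent iff `i ≠ j` and `X {i,j} = true`. -/
def DepGraph.graph {n : ℕ} {p : ℝ} {d : ℕ} (G : DepGraph n p d) (ω : G.Ω) :
    SimpleGraph (Fin n) where
  Adj i j := i ≠ j ∧ G.X s(i, j) ω = true
  symm := by
    constructor
    intro i j h
    refine ⟨h.1.symm, ?_⟩
    rw [Sym2.eq_swap]
    exact h.2
  loopless := ⟨fun i h => h.1 rfl⟩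

/-- A set `s` of vertices is uncorrelated if the edge variables at any two distinct pairs
of vertices of `s` are independent. -/
def DepGraph.Uncorrelated {n : ℕ} {p : ℝ} {d : ℕ} (G : DepGraph n p d)
    (s : Finset (Fin n)) : Prop :=
  ∀ e e' : Sym2 (Fin n), ¬ e.IsDiag → ¬ e'.IsDiag → e ≠ e' →
    (∀ v ∈ e, v ∈ s) → (∀ v ∈ e', v ∈ s) →
    IndepFun (G.X e) (G.X e') G.μ

/-! ### Auxiliary constructions -/

open scoped Classical

/-- coordinates of a finite product of probability measures are mutually independent -/
lemma iIndepFun_eval' {ι : Type*} [Fintype ι] {α : ι → Type*} [∀ i, MeasurableSpace (α i)]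
    (μ : ∀ i, Measure (α i)) [∀ i, IsProbabilityMeasure (μ i)] :
    iIndepFun (fun i (ω : ∀ j, α j) => ω i) (Measure.pi μ) := by
  rw [iIndepFun_iff_measure_inter_preimage_eq_mul]
  intro S sets hsets
  have key : ∀ (T : Finset ι), (∀ i ∈ T, MeasurableSet (sets i)) →
      Measure.pi μ (⋂ i ∈ T, (fun ω : ∀ j, α j => ω i) ⁻¹' sets i) = ∏ i ∈ T, μ i (sets i) := by
    intro T hT
    have h1 : (⋂ i ∈ T, (fun ω : ∀ j, α j => ω i) ⁻¹' sets i)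
        = Set.pi Set.univ (fun i => if i ∈ T then sets i else Set.univ) := by
      ext ω
      simp only [Set.mem_iInter, Set.mem_preimage, Set.mem_pi, Set.mem_univ, forall_true_left]
      constructor
      · intro h k
        by_cases hk : k ∈ T <;> simp [hk, h k]
      · intro h k hk
        have := h k
        simpa [hk] using this
    rw [h1, Measure.pi_pi]
    rw [Finset.prod_congr rfl (g := fun i => if i ∈ T then μ i (sets i) else 1)
      (fun i _ => by by_cases hi : i ∈ T <;> simp [hi])]
    simp [Finset.prod_ite_mem, Finset.univ_inter]
  rw [key S hsets]
  refine Finset.prod_congr rfl fun i hi => ?_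
  have := key {i} (by simpa using hsets i hi)
  simpa using this.symm

/-- the uniform probability measure on `(0, 1]`. -/
noncomputable def nuU : Measure ℝ := volume.restrict (Set.Ioc 0 1)

instance : IsProbabilityMeasure nuU :=
  ⟨by simp [nuU, Real.volume_Ioc]⟩

lemma nuU_apply_of_subset {A : Set ℝ} (hA : MeasurableSet A) (h : A ⊆ Set.Ioc 0 1) :
    nuU A = volume A := by
  rw [nuU, Measure.restrict_apply hA, Set.inter_eq_self_of_subset_left h]

/-- the deterministic symmetric adjacency rule -/
noncomputable def adjB (c x y : ℝ) : Bool :=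
  if (x ∈ Set.Ioc c (1/2 : ℝ) ∧ y ∈ Set.Ioc (1/2 : ℝ) 1) ∨
      (x ∈ Set.Ioc (1/2 : ℝ) 1 ∧ y ∈ Set.Ioc c (1/2 : ℝ)) then false else true

lemma adjB_symm (c x y : ℝ) : adjB c x y = adjB c y x := by
  unfold adjB
  exact if_congr (by tauto) rfl rfl

lemma adjB_eq_true {c x y : ℝ}
    (h : ¬ ((x ∈ Set.Ioc c (1/2 : ℝ) ∧ y ∈ Set.Ioc (1/2 : ℝ) 1) ∨
      (x ∈ Set.Ioc (1/2 : ℝ) 1 ∧ y ∈ Set.Ioc c (1/2 : ℝ)))) : adjB c x y = true := by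
  unfold adjB
  rw [if_neg h]

lemma measurable_adjB {α : Type*} [MeasurableSpace α] {f g : α → ℝ} (hf : Measurable f)
    (hg : Measurable g) (c : ℝ) : Measurable (fun a => adjB c (f a) (g a)) := by
  unfold adjB
  refine Measurable.ite ?_ measurable_const measurable_const
  exact ((measurableSet_Ioc.preimage hf).inter (measurableSet_Ioc.preimage hg)).union
    ((measurableSet_Ioc.preimage hf).inter (measurableSet_Ioc.preimage hg))

/-- the edge random variables -/
noncomputable def XB (n : ℕ) (c : ℝ) (e : Sym2 (Fin n)) (ω : Fin n → ℝ) : Bool :=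
  Sym2.lift ⟨fun a b => adjB c (ω a) (ω b), fun a b => adjB_symm c (ω a) (ω b)⟩ e

lemma measurable_XB (n : ℕ) (c : ℝ) (e : Sym2 (Fin n)) : Measurable (XB n c e) := by
  induction e using Sym2.ind with
  | _ i j => exact measurable_adjB (measurable_pi_apply i) (measurable_pi_apply j) c

lemma pi_eval_nuU (n : ℕ) (i : Fin n) {A : Set ℝ} (hA : MeasurableSet A) :
    Measure.pi (fun _ : Fin n => nuU) ((fun ω => ω i) ⁻¹' A) = nuU A := by
  rw [show (fun ω : Fin n → ℝ => ω i) ⁻¹' A = Function.eval i ⁻¹' A from rfl,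
    ← Set.univ_pi_update_univ, Measure.pi_pi]
  rw [Finset.prod_eq_single i (fun b _ hb => by simp [Function.update_of_ne hb])
    (fun h => absurd (Finset.mem_univ i) h)]
  simp

/-- **Lemma (a maximally dependent random graph with a huge clique).** For every integer
`n ≥ 2`, every `p` with `1/2 ≤ p < 1`, and `d = 2n - 2`, there is a `d`-dependent random
graph distribution `G(n,p,d)` whose sampled graph contains a clique on at least `n/2`
vertices with probability 1. -/
theorem half_clique_construction :
    ∀ n : ℕ, 2 ≤ n → ∀ p : ℝ, 1 / 2 ≤ p → p < 1 →
      ∃ G : DepGraph n p (2 * n - 2),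
        G.μ {ω | ∃ s : Finset (Fin n), (G.graph ω).IsClique ↑s ∧
          (n : ℝ) / 2 ≤ (s.card : ℝ)} = 1 := by
  intro n hn p hp hp1
  set c : ℝ := p - 1/2 with hc
  have hc0 : 0 ≤ c := by rw [hc]; linarith
  have hc2 : c < 1/2 := by rw [hc]; linarith
  refine ⟨{ Ω := Fin n → ℝ
            μ := Measure.pi (fun _ : Fin n => nuU)
            X := XB n c
            meas := measurable_XB n c
            edgeProb := ?_
            locDep := ?_ }, ?_⟩
  · -- edge probabilities
    intro e
    induction e using Sym2.ind with
    | _ i j =>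
      intro he
      have hij : i ≠ j := by simpa using he
      have hXset : {ω : Fin n → ℝ | XB n c s(i,j) ω = true}
          = (((fun ω : Fin n → ℝ => ω i) ⁻¹' (Set.Ioc c (1/2)) ∩
              (fun ω : Fin n → ℝ => ω j) ⁻¹' (Set.Ioc (1/2) 1)) ∪
             ((fun ω : Fin n → ℝ => ω i) ⁻¹' (Set.Ioc (1/2) 1) ∩
              (fun ω : Fin n → ℝ => ω j) ⁻¹' (Set.Ioc c (1/2))))ᶜ := by
        ext ω
        simp only [Set.mem_setOf_eq, Set.mem_compl_iff, Set.mem_union, Set.mem_inter_iff,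
          Set.mem_preimage]
        show adjB c (ω i) (ω j) = true ↔ _
        unfold adjB
        by_cases h : ((ω i ∈ Set.Ioc c (1/2 : ℝ) ∧ ω j ∈ Set.Ioc (1/2 : ℝ) 1) ∨
            (ω i ∈ Set.Ioc (1/2 : ℝ) 1 ∧ ω j ∈ Set.Ioc c (1/2 : ℝ)))
        · rw [if_pos h]
          exact iff_of_false (by simp) (fun hc => hc h)
        · rw [if_neg h]
          exact iff_of_true rfl h
      rw [hXset]
      have hMmeas : MeasurableSet (Set.Ioc c (1/2 : ℝ)) := measurableSet_Ioc
      have hHmeas : MeasurableSet (Set.Ioc (1/2 : ℝ) 1) := measurableSet_Ioc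
      have hnuM : nuU (Set.Ioc c (1/2)) = ENNReal.ofReal (1 - p) := by
        rw [nuU_apply_of_subset hMmeas (Set.Ioc_subset_Ioc hc0 (by norm_num)),
          Real.volume_Ioc]
        congr 1
        rw [hc]; ring
      have hnuH : nuU (Set.Ioc (1/2 : ℝ) 1) = ENNReal.ofReal (1/2) := by
        rw [nuU_apply_of_subset hHmeas (Set.Ioc_subset_Ioc (by norm_num) le_rfl),
          Real.volume_Ioc]
        norm_num
      have hind := (iIndepFun_eval' (fun _ : Fin n => nuU)).indepFun hij
      have hB1 : Measure.pi (fun _ : Fin n => nuU)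
          ((fun ω : Fin n → ℝ => ω i) ⁻¹' (Set.Ioc c (1/2)) ∩
            (fun ω : Fin n → ℝ => ω j) ⁻¹' (Set.Ioc (1/2) 1)) = ENNReal.ofReal ((1-p) * (1/2)) := by
        rw [hind.measure_inter_preimage_eq_mul _ _ hMmeas hHmeas,
          pi_eval_nuU n i hMmeas, pi_eval_nuU n j hHmeas, hnuM, hnuH,
          ← ENNReal.ofReal_mul (by linarith)]
      have hB2 : Measure.pi (fun _ : Fin n => nuU)
          ((fun ω : Fin n → ℝ => ω i) ⁻¹' (Set.Ioc (1/2) 1) ∩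
            (fun ω : Fin n → ℝ => ω j) ⁻¹' (Set.Ioc c (1/2))) = ENNReal.ofReal ((1/2) * (1-p)) := by
        rw [hind.measure_inter_preimage_eq_mul _ _ hHmeas hMmeas,
          pi_eval_nuU n i hHmeas, pi_eval_nuU n j hMmeas, hnuH, hnuM,
          ← ENNReal.ofReal_mul (by norm_num)]
      have hmeas1 : MeasurableSet ((fun ω : Fin n → ℝ => ω i) ⁻¹' (Set.Ioc c (1/2)) ∩
          (fun ω : Fin n → ℝ => ω j) ⁻¹' (Set.Ioc (1/2) 1)) :=
        (hMmeas.preimage (measurable_pi_apply i)).inter (hHmeas.preimage (measurable_pi_apply j))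
      have hmeas2 : MeasurableSet ((fun ω : Fin n → ℝ => ω i) ⁻¹' (Set.Ioc (1/2) 1) ∩
          (fun ω : Fin n → ℝ => ω j) ⁻¹' (Set.Ioc c (1/2))) :=
        (hHmeas.preimage (measurable_pi_apply i)).inter (hMmeas.preimage (measurable_pi_apply j))
      have hdisj : Disjoint ((fun ω : Fin n → ℝ => ω i) ⁻¹' (Set.Ioc c (1/2)) ∩
            (fun ω : Fin n → ℝ => ω j) ⁻¹' (Set.Ioc (1/2) 1))
          ((fun ω : Fin n → ℝ => ω i) ⁻¹' (Set.Ioc (1/2) 1) ∩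
            (fun ω : Fin n → ℝ => ω j) ⁻¹' (Set.Ioc c (1/2))) := by
        rw [Set.disjoint_left]
        rintro ω ⟨h1, _⟩ ⟨h3, _⟩
        exact absurd h3.1 (not_lt.2 h1.2)
      rw [measure_compl (hmeas1.union hmeas2) (measure_ne_top _ _), measure_univ,
        measure_union hdisj hmeas2, hB1, hB2,
        ← ENNReal.ofReal_add (by nlinarith) (by nlinarith)]
      have h1p : (1 - p) * (1/2) + (1/2) * (1 - p) = 1 - p := by ring
      rw [h1p]
      refine ENNReal.sub_eq_of_eq_add ENNReal.ofReal_ne_top ?_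
      rw [← ENNReal.ofReal_add (by linarith) (by linarith)]
      norm_num
  · -- local dependence
    intro e
    induction e using Sym2.ind with
    | _ i j =>
      intro he
      have hij : i ≠ j := by simpa using he
      set A : Finset (Sym2 (Fin n)) := (Finset.univ.erase i).image (fun v => s(i,v)) with hA
      set B : Finset (Sym2 (Fin n)) := (Finset.univ.erase j).image (fun v => s(j,v)) with hB
      refine ⟨(A ∪ B).erase s(i,j), Finset.notMem_erase _ _, ?_, ?_⟩
      · have h1 : ((A ∪ B).erase s(i,j)).card ≤ A.card + B.card :=
          le_trans (Finset.card_erase_le) (Finset.card_union_le _ _)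
        have hAc : A.card ≤ n - 1 := by
          refine le_trans Finset.card_image_le ?_
          rw [Finset.card_erase_of_mem (Finset.mem_univ i)]
          simp
        have hBc : B.card ≤ n - 1 := by
          refine le_trans Finset.card_image_le ?_
          rw [Finset.card_erase_of_mem (Finset.mem_univ j)]
          simp
        omega
      · -- independence from variables at disjoint edges
        have hvert : ∀ f : Sym2 (Fin n), ¬ f.IsDiag → f ∉ (A ∪ B).erase s(i,j) →
            f ≠ s(i,j) → ∀ v ∈ f, v ≠ i ∧ v ≠ j := by
          intro f hd hN hne v hv
          obtain ⟨w, rfl⟩ := Sym2.mem_iff_exists.1 hv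
          have hwv : w ≠ v := fun h => hd (by simp [h])
          constructor
          · rintro rfl
            exact hN (Finset.mem_erase.2 ⟨hne, Finset.mem_union_left _
              (Finset.mem_image.2 ⟨w, Finset.mem_erase.2 ⟨hwv, Finset.mem_univ w⟩, rfl⟩)⟩)
          · rintro rfl
            exact hN (Finset.mem_erase.2 ⟨hne, Finset.mem_union_right _
              (Finset.mem_image.2 ⟨w, Finset.mem_erase.2 ⟨hwv, Finset.mem_univ w⟩, rfl⟩)⟩)
        set S : Finset (Fin n) := {i, j} with hS
        set T : Finset (Fin n) := Sᶜ with hT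
        have hiS : i ∈ S := by simp [hS]
        have hjS : j ∈ S := by simp [hS]
        have h1 := (iIndepFun_eval' (fun _ : Fin n => nuU)).indepFun_finset S T
          disjoint_compl_right (fun k => measurable_pi_apply k)
        set φ : ({x // x ∈ S} → ℝ) → Bool := fun g => adjB c (g ⟨i, hiS⟩) (g ⟨j, hjS⟩) with hφdef
        set ext : ({x // x ∈ T} → ℝ) → (Fin n → ℝ) :=
          fun g v => if h : v ∈ T then g ⟨v, h⟩ else 0 with hextdef
        set ψ : ({x // x ∈ T} → ℝ) →
            ({f : Sym2 (Fin n) // ¬ f.IsDiag ∧ f ∉ (A ∪ B).erase s(i,j) ∧ f ≠ s(i,j)} → Bool) :=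
          fun g f => XB n c f.1 (ext g) with hψdef
        have hφ : Measurable φ := measurable_adjB (measurable_pi_apply _) (measurable_pi_apply _) c
        have hext : Measurable ext := by
          refine measurable_pi_iff.2 fun v => ?_
          by_cases h : v ∈ T
          · simpa [hextdef, h] using measurable_pi_apply (⟨v, h⟩ : {x // x ∈ T})
          · simpa [hextdef, h] using measurable_const
        have hψ : Measurable ψ := measurable_pi_iff.2 fun f => (measurable_XB n c f.1).comp hext
        have hXeq : XB n c s(i,j) = φ ∘ (fun a (k : {x // x ∈ S}) => a k.1) := rfl
        have hYeq : (fun (ω : Fin n → ℝ)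
              (f : {f : Sym2 (Fin n) // ¬ f.IsDiag ∧ f ∉ (A ∪ B).erase s(i,j) ∧ f ≠ s(i,j)}) =>
                XB n c f.1 ω)
            = ψ ∘ (fun a (k : {x // x ∈ T}) => a k.1) := by
          funext ω f
          obtain ⟨f, hd, hN, hne⟩ := f
          induction f using Sym2.ind with
          | _ a b =>
            have ha := hvert s(a,b) hd hN hne a (by simp)
            have hb := hvert s(a,b) hd hN hne b (by simp)
            have haT : a ∈ T := by simp [hT, hS, Finset.mem_compl, ha.1, ha.2]
            have hbT : b ∈ T := by simp [hT, hS, Finset.mem_compl, hb.1, hb.2]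
            show adjB c (ω a) (ω b) = adjB c (ext (fun k => ω k.1) a) (ext (fun k => ω k.1) b)
            rw [show ext (fun k : {x // x ∈ T} => ω k.1) a = ω a from by simp [hextdef, haT],
              show ext (fun k : {x // x ∈ T} => ω k.1) b = ω b from by simp [hextdef, hbT]]
        rw [hXeq, hYeq]
        exact h1.comp hφ hψ
  · -- almost-sure big clique
    convert (measure_univ : Measure.pi (fun _ : Fin n => nuU) Set.univ = 1) using 2
    rw [Set.eq_univ_iff_forall]
    intro ω
    simp only [Set.mem_setOf_eq]
    set s₁ : Finset (Fin n) := Finset.univ.filter (fun v => ω v ≤ 1/2) with hs₁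
    set s₂ : Finset (Fin n) := Finset.univ.filter (fun v => ¬ ω v ≤ 1/2) with hs₂
    have hcard : s₁.card + s₂.card = n := by
      rw [hs₁, hs₂, Finset.card_filter_add_card_filter_not]
      simp
    have hclique1 : ∀ x ∈ s₁, ∀ y ∈ s₁, x ≠ y → XB n c s(x,y) ω = true := by
      intro x hx y hy _
      have hx' : ω x ≤ 1/2 := by simpa [hs₁] using hx
      have hy' : ω y ≤ 1/2 := by simpa [hs₁] using hy
      show adjB c (ω x) (ω y) = true
      refine adjB_eq_true ?_
      rintro (⟨_, h2⟩ | ⟨h1, _⟩)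
      · exact absurd h2.1 (not_lt.2 hy')
      · exact absurd h1.1 (not_lt.2 hx')
    have hclique2 : ∀ x ∈ s₂, ∀ y ∈ s₂, x ≠ y → XB n c s(x,y) ω = true := by
      intro x hx y hy _
      have hx' : ¬ ω x ≤ 1/2 := by simpa [hs₂] using hx
      have hy' : ¬ ω y ≤ 1/2 := by simpa [hs₂] using hy
      show adjB c (ω x) (ω y) = true
      refine adjB_eq_true ?_
      rintro (⟨h1, _⟩ | ⟨_, h2⟩)
      · exact absurd h1.2 hx'
      · exact absurd h2.2 hy'
    by_cases hbig : (n : ℝ) / 2 ≤ (s₁.card : ℝ)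
    · exact ⟨s₁, fun x hx y hy hxy =>
        ⟨hxy, hclique1 x (by simpa using hx) y (by simpa using hy) hxy⟩, hbig⟩
    · refine ⟨s₂, fun x hx y hy hxy =>
        ⟨hxy, hclique2 x (by simpa using hx) y (by simpa using hy) hxy⟩, ?_⟩
      have hcast : (s₁.card : ℝ) + (s₂.card : ℝ) = n := by
        rw [← Nat.cast_add, hcard]
      push_neg at hbig
      linarith
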